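/- arXiv:2506.15519 — 4 statements merged into one kernel-verified Lean document; each statement's English description precedes it below -/
import Mathlib

section
/- Let ∇ be a torsion-free affine connection on M preserving an almost hypercomplex structure (I,J,K). If a vector field X satisfies L_X I = L_X J = L_X K = 0 and also L_{IX} I = L_{IX} J = L_{IX} K = 0, then X is ∇-parallel. -/
/- STATEMENT 2: Let ∇ be a torsion-free affine connection on M preserving an
almost hypercomplex structure (I,J,K).  If a vector field X satisfies
L_X I = L_X J = L_X K = 0 and L_{IX} I = L_{IX} J = L_{IX} K = 0, then X is
∇-parallel.

Same model as in Statement 1: vector fields form a Lie algebra `g` over ℝ,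
D is the (ℝ-bilinear) connection, and (L_X L)(Y) = ⁅X, L Y⁆ - L ⁅X, Y⁆. -/

theorem stmt2 {g : Type*} [LieRing g] [LieAlgebra ℝ g]
    (I J K : g →ₗ[ℝ] g)
    (hI2 : ∀ X, I (I X) = -X) (hJ2 : ∀ X, J (J X) = -X) (hK2 : ∀ X, K (K X) = -X)
    (hIJ : ∀ X, I (J X) = K X)
    (D : g →ₗ[ℝ] g →ₗ[ℝ] g)
    (htf : ∀ X Y, D X Y - D Y X = ⁅X, Y⁆)
    (hDI : ∀ X Y, D X (I Y) = I (D X Y))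
    (hDJ : ∀ X Y, D X (J Y) = J (D X Y))
    (hDK : ∀ X Y, D X (K Y) = K (D X Y))
    (X : g)
    (hXI : ∀ Y, ⁅X, I Y⁆ - I ⁅X, Y⁆ = 0)
    (hXJ : ∀ Y, ⁅X, J Y⁆ - J ⁅X, Y⁆ = 0)
    (hXK : ∀ Y, ⁅X, K Y⁆ - K ⁅X, Y⁆ = 0)
    (hIXI : ∀ Y, ⁅I X, I Y⁆ - I ⁅I X, Y⁆ = 0)
    (hIXJ : ∀ Y, ⁅I X, J Y⁆ - J ⁅I X, Y⁆ = 0)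
    (hIXK : ∀ Y, ⁅I X, K Y⁆ - K ⁅I X, Y⁆ = 0) :
    ∀ Y, D Y X = 0 := by
  -- quaternionic relation JI = -K
  have hJI : ∀ a : g, J (I a) = -(K a) := by
    intro a
    have h1 : I (J (I (J a))) = -a := by
      rw [hIJ, hIJ]; exact hK2 a
    have h2 : J (I (J a)) = I a := by
      have := congrArg I h1
      rw [hI2, map_neg] at this
      exact neg_injective this
    have := congrArg J (h2.symm ▸ rfl : J (I (J a)) = I a)
    -- instead, substitute a := J b
    have key : ∀ b : g, J (I (J (J b))) = I (J b) := fun b => by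
      have h1' : I (J (I (J (J b)))) = -(J b) := by rw [hIJ, hIJ]; exact hK2 (J b)
      have := congrArg I h1'
      rw [hI2, map_neg] at this
      exact neg_injective this
    have k := key a
    rw [hJ2 a, map_neg, map_neg, hIJ] at k
    exact neg_eq_iff_eq_neg.mp k
  -- from L_Z L = 0 and ∇L = 0 deduce D (L Y) Z = L (D Y Z)
  have key : ∀ (L : g →ₗ[ℝ] g), (∀ A B, D A (L B) = L (D A B)) → ∀ Z : g,
      (∀ Y, ⁅Z, L Y⁆ - L ⁅Z, Y⁆ = 0) → ∀ Y, D (L Y) Z = L (D Y Z) := by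
    intro L hDL Z hZ Y
    have h := hZ Y
    rw [← htf Z (L Y), ← htf Z Y, hDL, map_sub] at h
    have h' : L (D Y Z) - D (L Y) Z = 0 := by rw [← h]; abel
    exact (sub_eq_zero.mp h').symm
  intro Y
  have hA : D (J Y) X = J (D Y X) := key J hDJ X hXJ Y
  have hB : D (J Y) (I X) = J (D Y (I X)) := key J hDJ (I X) hIXJ Y
  have e1 : D (J Y) (I X) = I (J (D Y X)) := by rw [hDI, hA]
  have e2 : D (J Y) (I X) = J (I (D Y X)) := by rw [hB, hDI]
  have e3 : I (J (D Y X)) = J (I (D Y X)) := e1.symm.trans e2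
  rw [hIJ, hJI] at e3
  have h2 : (2 : ℝ) • K (D Y X) = 0 := by
    rw [two_smul]; nth_rewrite 1 [e3]; abel
  have hK0 : K (D Y X) = 0 := (smul_eq_zero.mp h2).resolve_left (by norm_num)
  have := hK2 (D Y X)
  rw [hK0, map_zero] at this
  exact neg_eq_zero.mp this.symm
end

section
/- On a compact hypercomplex manifold (M,I,J,K) with an HKT metric, the space of (1,0)-vector fields Z (with respect to I) that are hyperholomorphic (L_Z I = L_Z J = L_Z K = 0) is closed under the operation Z ↦ J Z̄. -/
/- STATEMENT 10: On a compact hypercomplex manifold (M,I,J,K) with an HKT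
metric, the space of hyperholomorphic (1,0)-vector fields Z (with respect to I)
is closed under Z ↦ J Z̄.

We model the complexified vector fields as a complex Lie algebra `gC` equipped
with a real structure σ (the complex conjugation X ↦ X̄: an antilinear involution
compatible with the Lie bracket), and I, J, K as the ℂ-linear extensions of the
real endomorphisms (hence commuting with σ), satisfying the quaternionic
relations and integrability (vanishing Nijenhuis tensors).  A (1,0)-field Z
satisfies IZ = √-1 Z; Z is hyperholomorphic when
(L_Z L)(Y) = ⁅Z, L Y⁆ - L ⁅Z, Y⁆ = 0 for L ∈ {I,J,K}. -/

theorem stmt10 {gC : Type*} [LieRing gC] [LieAlgebra ℂ gC]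
    (I J K : gC →ₗ[ℂ] gC)
    (hI2 : ∀ X, I (I X) = -X) (hJ2 : ∀ X, J (J X) = -X) (hK2 : ∀ X, K (K X) = -X)
    (hIJ : ∀ X, I (J X) = K X)
    -- integrability of I, J, K
    (hNI : ∀ X Y, ⁅I X, I Y⁆ - I ⁅I X, Y⁆ - I ⁅X, I Y⁆ - ⁅X, Y⁆ = 0)
    (hNJ : ∀ X Y, ⁅J X, J Y⁆ - J ⁅J X, Y⁆ - J ⁅X, J Y⁆ - ⁅X, Y⁆ = 0)
    (hNK : ∀ X Y, ⁅K X, K Y⁆ - K ⁅K X, Y⁆ - K ⁅X, K Y⁆ - ⁅X, Y⁆ = 0)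
    -- the real structure (complex conjugation of vector fields)
    (σ : gC → gC)
    (hσadd : ∀ X Y, σ (X + Y) = σ X + σ Y)
    (hσsmul : ∀ (c : ℂ) X, σ (c • X) = (starRingEnd ℂ c) • σ X)
    (hσinv : ∀ X, σ (σ X) = X)
    (hσbr : ∀ X Y, σ ⁅X, Y⁆ = ⁅σ X, σ Y⁆)
    (hσI : ∀ X, σ (I X) = I (σ X)) (hσJ : ∀ X, σ (J X) = J (σ X))
    (hσK : ∀ X, σ (K X) = K (σ X))
    -- Z is a hyperholomorphic (1,0)-vector field
    (Z : gC) (hZ10 : I Z = Complex.I • Z)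
    (hZI : ∀ Y, ⁅Z, I Y⁆ - I ⁅Z, Y⁆ = 0)
    (hZJ : ∀ Y, ⁅Z, J Y⁆ - J ⁅Z, Y⁆ = 0)
    (hZK : ∀ Y, ⁅Z, K Y⁆ - K ⁅Z, Y⁆ = 0) :
    (∀ Y, ⁅J (σ Z), I Y⁆ - I ⁅J (σ Z), Y⁆ = 0) ∧
    (∀ Y, ⁅J (σ Z), J Y⁆ - J ⁅J (σ Z), Y⁆ = 0) ∧
    (∀ Y, ⁅J (σ Z), K Y⁆ - K ⁅J (σ Z), Y⁆ = 0) := by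
  -- Notation: X = σ Z
  set X := σ Z with hX
  -- X is hyperholomorphic
  have hXI : ∀ Y, ⁅X, I Y⁆ = I ⁅X, Y⁆ := by
    intro Y
    have h := sub_eq_zero.mp (hZI (σ Y))
    have h2 := congrArg σ h
    simp only [hσbr, hσI, hσinv] at h2
    exact h2
  have hXK : ∀ Y, ⁅X, K Y⁆ = K ⁅X, Y⁆ := by
    intro Y
    have h := sub_eq_zero.mp (hZK (σ Y))
    have h2 := congrArg σ h
    simp only [hσbr, hσK, hσinv] at h2
    exact h2
  have hXJ : ∀ Y, ⁅X, J Y⁆ = J ⁅X, Y⁆ := by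
    intro Y
    have h := sub_eq_zero.mp (hZJ (σ Y))
    have h2 := congrArg σ h
    simp only [hσbr, hσJ, hσinv] at h2
    exact h2
  -- quaternion identities
  have hIK : ∀ Y, I (K Y) = -(J Y) := by
    intro Y
    rw [← hIJ, hI2]
  have hKJ : ∀ Y, K (J Y) = -(I Y) := by
    intro Y
    rw [← hIJ, hJ2, map_neg]
  have hKI : ∀ Y, K (I Y) = J Y := by
    intro Y
    have h := congrArg K (hKJ Y)
    rw [hK2, map_neg] at h
    have h2 := neg_injective h
    exact h2.symm
  have hJK : ∀ Y, J (K Y) = I Y := by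
    intro Y
    have h := hKI (K Y)
    rw [hIK, map_neg, hKJ, neg_neg] at h
    exact h.symm
  -- K (J X) = I • X  since I X = -i • X
  have hX01 : I X = -(Complex.I • X) := by
    rw [← hσI, hZ10, hσsmul]
    simp
    rfl
  have hKJX : K (J X) = Complex.I • X := by
    rw [hKJ, hX01, neg_neg]
  -- L_{JX} J = 0, from Nijenhuis of J and hyperholomorphy of X
  have hWJ : ∀ Y, ⁅J X, J Y⁆ = J ⁅J X, Y⁆ := by
    intro Y
    have h := hNJ X Y
    rw [hXJ, hJ2] at h
    have : ⁅J X, J Y⁆ - J ⁅J X, Y⁆ = 0 := by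
      rw [← h]; abel
    exact sub_eq_zero.mp this
  -- L_{JX} K = 0, from Nijenhuis of K applied to (J X, Y)
  have hWK : ∀ Y, ⁅J X, K Y⁆ = K ⁅J X, Y⁆ := by
    intro Y
    have h := hNK (J X) Y
    rw [hKJX, smul_lie, smul_lie, hXK, map_smul] at h
    have h2 : K ⁅J X, K Y⁆ = -⁅J X, Y⁆ := by
      have : -(K ⁅J X, K Y⁆) - ⁅J X, Y⁆ = 0 := by rw [← h]; abel
      have := sub_eq_zero.mp this
      rw [← this, neg_neg]
    have := congrArg K h2
    rw [hK2, map_neg] at this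
    exact (neg_injective this)
  -- L_{JX} I = 0, since I = J ∘ K
  have hWI : ∀ Y, ⁅J X, I Y⁆ = I ⁅J X, Y⁆ := by
    intro Y
    calc ⁅J X, I Y⁆ = ⁅J X, J (K Y)⁆ := by rw [hJK]
    _ = J ⁅J X, K Y⁆ := hWJ (K Y)
    _ = J (K ⁅J X, Y⁆) := by rw [hWK]
    _ = I ⁅J X, Y⁆ := hJK _
  exact ⟨fun Y => sub_eq_zero.mpr (hWI Y), fun Y => sub_eq_zero.mpr (hWJ Y),
    fun Y => sub_eq_zero.mpr (hWK Y)⟩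
end

section
/- Let g be a Lie algebra with an abelian hypercomplex structure (I,J,K) and let Z be a hyperholomorphic element of the (1,0)-space of I in g ⊗ ℂ (i.e. L_Z I = L_Z J = L_Z K = 0 where (L_Z L)(Y) = [Z, LY] - L[Z,Y]). Then Z lies in the center of g ⊗ ℂ. -/
/- STATEMENT 12: Let g be a Lie algebra with an abelian hypercomplex structure
(I,J,K) and Z a hyperholomorphic element of the (1,0)-space of I in g ⊗ ℂ
(i.e. ⁅Z, L Y⁆ - L ⁅Z, Y⁆ = 0 for L ∈ {I,J,K}).  Then Z lies in the center of
g ⊗ ℂ.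

We model the complexification g ⊗ ℂ as a complex Lie algebra `gC` with I, J, K
the ℂ-linear extensions; abelianness ⁅LX, LY⁆ = ⁅X,Y⁆ and the quaternionic
relations extend ℂ-bilinearly. -/

theorem stmt12 {gC : Type*} [LieRing gC] [LieAlgebra ℂ gC]
    (I J K : gC →ₗ[ℂ] gC)
    (hI2 : ∀ X, I (I X) = -X) (hJ2 : ∀ X, J (J X) = -X) (hK2 : ∀ X, K (K X) = -X)
    (hIJ : ∀ X, I (J X) = K X)
    (habI : ∀ X Y, ⁅I X, I Y⁆ = ⁅X, Y⁆)
    (habJ : ∀ X Y, ⁅J X, J Y⁆ = ⁅X, Y⁆)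
    (habK : ∀ X Y, ⁅K X, K Y⁆ = ⁅X, Y⁆)
    (Z : gC) (hZ10 : I Z = Complex.I • Z)
    (hZI : ∀ Y, ⁅Z, I Y⁆ - I ⁅Z, Y⁆ = 0)
    (hZJ : ∀ Y, ⁅Z, J Y⁆ - J ⁅Z, Y⁆ = 0)
    (hZK : ∀ Y, ⁅Z, K Y⁆ - K ⁅Z, Y⁆ = 0) :
    ∀ Y : gC, ⁅Z, Y⁆ = 0 := by
  have hZI' : ∀ Y, ⁅Z, I Y⁆ = I ⁅Z, Y⁆ := fun Y => sub_eq_zero.mp (hZI Y)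
  have hZJ' : ∀ Y, ⁅Z, J Y⁆ = J ⁅Z, Y⁆ := fun Y => sub_eq_zero.mp (hZJ Y)
  -- J (I X) = - K X  (quaternionic relation derived from K∘K = -1 and K = I∘J)
  have hJI : ∀ X, J (I X) = - K X := by
    intro X
    -- first: J (I (J X)) = I X, from I(J(I(J X))) = K (K X) = -X
    have h1 : ∀ W, J (I (J W)) = I W := by
      intro W
      have h0 : I (J (I (J W))) = -W := by
        rw [hIJ (I (J W)), hIJ W, hK2]
      have := congrArg I h0
      rw [hI2] at this
      have : J (I (J W)) = I W := by
        have h2 : -(J (I (J W))) = I (-W) := this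
        rw [map_neg] at h2
        exact neg_injective h2
      exact this
    -- now substitute X = J (-W) ... use h1 with W := -(J X): J(J(-(J X))) = ... easier:
    -- apply h1 at W := J X? J(I(J(J X))) = I (J X) ⇒ J(I(-X)) = K X ⇒ -J(I X) = K X
    have h3 := h1 (J X)
    rw [hJ2, hIJ] at h3
    rw [map_neg, map_neg] at h3
    exact neg_eq_iff_eq_neg.mp h3
  -- Step: for all Y, I ⁅Z, Y⁆ = -i • ⁅Z, Y⁆
  have key : ∀ Y, I ⁅Z, Y⁆ = -(Complex.I • ⁅Z, Y⁆) := by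
    intro Y
    have h1 : ⁅Z, Y⁆ = Complex.I • I ⁅Z, Y⁆ := by
      calc ⁅Z, Y⁆ = ⁅I Z, I Y⁆ := (habI Z Y).symm
        _ = Complex.I • ⁅Z, I Y⁆ := by rw [hZ10, smul_lie]
        _ = Complex.I • I ⁅Z, Y⁆ := by rw [hZI']
    have := congrArg I h1
    rw [map_smul, hI2] at this
    rw [this, smul_neg]
  intro Y
  set c := ⁅Z, Y⁆ with hc
  -- K c = -i • J c
  have h4 : K c = -(Complex.I • J c) := by
    have h := key (J Y)
    rw [hZJ', hIJ] at h
    exact h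
  -- K c = i • J c
  have h5 : K c = Complex.I • J c := by
    have h := congrArg J (key Y)
    rw [hJI, map_neg, map_smul] at h
    exact neg_injective h
  have hJc : J c = 0 := by
    have h6 : Complex.I • J c = -(Complex.I • J c) := h5 ▸ h4
    have h7 : (2 * Complex.I) • J c = 0 := by
      rw [two_mul, add_smul]
      nth_rewrite 1 [h6]
      exact neg_add_cancel _
    have h8 : (2 * Complex.I) ≠ 0 := by simp [Complex.I_ne_zero]
    exact (smul_eq_zero.mp h7).resolve_left h8
  have := congrArg J hJc
  rw [hJ2, map_zero] at this
  exact neg_eq_zero.mp this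
end

section
/- Let A(X,Y,Z) := -(1/2)(T(X,IY,IZ) + T(IX,IY,Z) + T(X,KY,KZ) + T(IX,KY,JZ)) where T is a 3-form (totally antisymmetric trilinear form) on a vector space V with a hypercomplex structure (I,J,K). Then for any orthonormal basis e₁,…,e_{4n} of (V,g) with g compatible with (I,J,K), one has Σᵢ (T(eᵢ, IX, Ieᵢ) + T(Ieᵢ, IX, eᵢ)) = 0 and Σᵢ (T(eᵢ, KX, Keᵢ) + T(Ieᵢ, KX, Jeᵢ)) = -2 Σᵢ T(KX, eᵢ, Keᵢ), hence Σᵢ A(eᵢ, X, eᵢ) = Σᵢ T(KX, eᵢ, Keᵢ). -/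
open scoped RealInnerProductSpace

set_option linter.unusedSectionVars false

section Aux
variable {V : Type*} [NormedAddCommGroup V] [InnerProductSpace ℝ V]

lemma stmt19_upd0 (c z : V) (w : V) :
    (![w, c, z] : Fin 3 → V) = Function.update ![0, c, z] 0 w := by
  funext i; fin_cases i <;> simp

lemma stmt19_upd2 (x c : V) (w : V) :
    (![x, c, w] : Fin 3 → V) = Function.update ![x, c, 0] 2 w := by
  funext i; fin_cases i <;> simp

noncomputable def stmt19_B (T : AlternatingMap ℝ V ℝ (Fin 3)) (c : V) :
    V →ₗ[ℝ] V →ₗ[ℝ] ℝ :=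
  LinearMap.mk₂ ℝ (fun x y => T ![x, c, y])
    (fun x x' y => by
      show T ![x + x', c, y] = T ![x, c, y] + T ![x', c, y]
      rw [stmt19_upd0 c y (x + x'), T.map_update_add,
        ← stmt19_upd0, ← stmt19_upd0])
    (fun r x y => by
      show T ![r • x, c, y] = r • T ![x, c, y]
      rw [stmt19_upd0 c y (r • x), T.map_update_smul, ← stmt19_upd0])
    (fun x y y' => by
      show T ![x, c, y + y'] = T ![x, c, y] + T ![x, c, y']
      rw [stmt19_upd2 x c (y + y'), T.map_update_add,
        ← stmt19_upd2, ← stmt19_upd2])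
    (fun r x y => by
      show T ![x, c, r • y] = r • T ![x, c, y]
      rw [stmt19_upd2 x c (r • y), T.map_update_smul, ← stmt19_upd2])

@[simp] lemma stmt19_B_apply (T : AlternatingMap ℝ V ℝ (Fin 3)) (c x y : V) :
    stmt19_B T c x y = T ![x, c, y] := rfl

lemma stmt19_key {ι : Type*} [Fintype ι] (e : OrthonormalBasis ι ℝ V)
    (B : V →ₗ[ℝ] V →ₗ[ℝ] ℝ) (L : V →ₗ[ℝ] V)
    (hL : ∀ x y : V, ⟪L x, y⟫ = -⟪x, L y⟫) :
    ∑ i, B (e i) (L (e i)) = -∑ i, B (L (e i)) (e i) := by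
  have expand : ∀ v : V, v = ∑ j, ⟪e j, v⟫ • e j := fun v => (e.sum_repr' v).symm
  have hterm : ∀ i j : ι, ⟪e j, L (e i)⟫ • B (e i) (e j)
      = -(⟪e i, L (e j)⟫ • B (e i) (e j)) := by
    intro i j
    rw [real_inner_comm (L (e i)) (e j), hL, real_inner_comm, neg_smul]
  calc ∑ i, B (e i) (L (e i))
      = ∑ i, ∑ j, ⟪e j, L (e i)⟫ • B (e i) (e j) := by
        refine Finset.sum_congr rfl fun i _ => ?_
        conv_lhs => rw [expand (L (e i))]
        simp
    _ = -∑ i, ∑ j, ⟪e i, L (e j)⟫ • B (e i) (e j) := by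
        rw [← Finset.sum_neg_distrib]
        refine Finset.sum_congr rfl fun i _ => ?_
        rw [← Finset.sum_neg_distrib]
        exact Finset.sum_congr rfl fun j _ => hterm i j
    _ = -∑ j, ∑ i, ⟪e i, L (e j)⟫ • B (e i) (e j) := by rw [Finset.sum_comm]
    _ = -∑ j, B (L (e j)) (e j) := by
        congr 1
        refine Finset.sum_congr rfl fun j _ => ?_
        conv_rhs => rw [expand (L (e j))]
        simp

lemma stmt19_swap01 (T : AlternatingMap ℝ V ℝ (Fin 3)) (x y z : V) :
    T ![x, y, z] = -T ![y, x, z] := by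
  have := T.map_swap ![y, x, z] (i := 0) (j := 1) (by decide)
  rw [show (![y, x, z] ∘ Equiv.swap (0:Fin 3) 1) = ![x, y, z] from by
    funext i; fin_cases i <;> simp [Equiv.swap_apply_of_ne_of_ne]] at this
  rw [this]

lemma stmt19_swap12 (T : AlternatingMap ℝ V ℝ (Fin 3)) (x y z : V) :
    T ![x, y, z] = -T ![x, z, y] := by
  have := T.map_swap ![x, z, y] (i := 1) (j := 2) (by decide)
  rw [show (![x, z, y] ∘ Equiv.swap (1:Fin 3) 2) = ![x, y, z] from by
    funext i; fin_cases i <;> simp [Equiv.swap_apply_of_ne_of_ne]] at this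
  rw [this]

end Aux


/- STATEMENT 19: Let T be a 3-form on a vector space V with hypercomplex
structure (I,J,K) (I² = J² = K² = -Id, IJ = K = -JI) and compatible inner
product g, and set
A(X,Y,Z) := -(1/2)(T(X,IY,IZ) + T(IX,IY,Z) + T(X,KY,KZ) + T(IX,KY,JZ)).
Then for any orthonormal basis e₁,…,e_{4n} of (V,g):
Σᵢ (T(eᵢ, IX, Ieᵢ) + T(Ieᵢ, IX, eᵢ)) = 0,
Σᵢ (T(eᵢ, KX, Keᵢ) + T(Ieᵢ, KX, Jeᵢ)) = -2 Σᵢ T(KX, eᵢ, Keᵢ),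
hence Σᵢ A(eᵢ, X, eᵢ) = Σᵢ T(KX, eᵢ, Keᵢ). -/

open scoped RealInnerProductSpace in
theorem stmt19 {V : Type*} [NormedAddCommGroup V] [InnerProductSpace ℝ V]
    (n : ℕ) (e : OrthonormalBasis (Fin (4 * n)) ℝ V)
    (I J K : V →ₗ[ℝ] V)
    (hI2 : ∀ X, I (I X) = -X) (hJ2 : ∀ X, J (J X) = -X) (hK2 : ∀ X, K (K X) = -X)
    (hIJ : ∀ X, I (J X) = K X) (hJI : ∀ X, J (I X) = -K X)
    (hgI : ∀ X Y, ⟪I X, I Y⟫ = ⟪X, Y⟫)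
    (hgJ : ∀ X Y, ⟪J X, J Y⟫ = ⟪X, Y⟫)
    (hgK : ∀ X Y, ⟪K X, K Y⟫ = ⟪X, Y⟫)
    (T : AlternatingMap ℝ V ℝ (Fin 3))
    (A : V → V → V → ℝ)
    (hA : ∀ X Y Z, A X Y Z =
      -(1/2) * (T ![X, I Y, I Z] + T ![I X, I Y, Z]
        + T ![X, K Y, K Z] + T ![I X, K Y, J Z]))
    (X : V) :
    (∑ i, (T ![e i, I X, I (e i)] + T ![I (e i), I X, e i]) = 0) ∧
    (∑ i, (T ![e i, K X, K (e i)] + T ![I (e i), K X, J (e i)])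
      = -2 * ∑ i, T ![K X, e i, K (e i)]) ∧
    (∑ i, A (e i) X (e i) = ∑ i, T ![K X, e i, K (e i)]) := by
  have hIskew : ∀ x y : V, ⟪I x, y⟫ = -⟪x, I y⟫ := by
    intro x y
    rw [← hgI (I x) y, hI2, inner_neg_left]
  have hJskew : ∀ x y : V, ⟪J x, y⟫ = -⟪x, J y⟫ := by
    intro x y
    rw [← hgJ (J x) y, hJ2, inner_neg_left]
  -- first identity
  have h1 : ∑ i, T ![e i, I X, I (e i)] = -∑ i, T ![I (e i), I X, e i] := by
    have := stmt19_key e (stmt19_B T (I X)) I hIskew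
    simpa using this
  have first : ∑ i, (T ![e i, I X, I (e i)] + T ![I (e i), I X, e i]) = 0 := by
    rw [Finset.sum_add_distrib, h1, neg_add_cancel]
  -- second identity
  have h2 : ∑ i, T ![I (e i), K X, J (e i)] = -∑ i, T ![K X, e i, K (e i)] := by
    have := stmt19_key e ((stmt19_B T (K X)).comp I) J hJskew
    simp only [LinearMap.comp_apply, stmt19_B_apply] at this
    rw [this, neg_inj]
    refine Finset.sum_congr rfl fun i _ => ?_
    rw [hIJ, stmt19_swap01, ← stmt19_swap12]
  have h3 : ∑ i, T ![e i, K X, K (e i)] = -∑ i, T ![K X, e i, K (e i)] := by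
    rw [← Finset.sum_neg_distrib]
    exact Finset.sum_congr rfl fun i _ => stmt19_swap01 T _ _ _
  have second : ∑ i, (T ![e i, K X, K (e i)] + T ![I (e i), K X, J (e i)])
      = -2 * ∑ i, T ![K X, e i, K (e i)] := by
    rw [Finset.sum_add_distrib, h2, h3]; ring
  refine ⟨first, second, ?_⟩
  have hsplit : ∑ i, A (e i) X (e i)
      = -(1/2) * ((∑ i, (T ![e i, I X, I (e i)] + T ![I (e i), I X, e i]))
        + ∑ i, (T ![e i, K X, K (e i)] + T ![I (e i), K X, J (e i)])) := by
    rw [← Finset.sum_add_distrib, Finset.mul_sum]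
    refine Finset.sum_congr rfl fun i _ => ?_
    rw [hA]; ring
  rw [hsplit, first, second]; ring
end
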